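/- Fix 1 ≤ s < d. There exist constants 0 < c1 ≤ c2 such that for all x > 0, c1 ≤ J(x) ≤ c2 · max(1, x^{−s/2}), where J(x) = ∫_{ℝ^d} |y|^{s−d} / (exp(x(|y|²/2 − 1)) + 1) dy. -/

import Mathlib

open Real MeasureTheory Set Metric Module
open scoped ENNReal NNReal

lemma integrable_radial {d : ℕ} (hd : 1 ≤ d) {g : ℝ → ℝ} (hg : Measurable g)
    (h : IntegrableOn (fun r => g r * r ^ (d - 1)) (Set.Ioi (0:ℝ)) volume) :
    Integrable (fun y : EuclideanSpace ℝ (Fin d) => g ‖y‖) := by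
  haveI : Nonempty (Fin d) := ⟨⟨0, hd⟩⟩
  set E := EuclideanSpace ℝ (Fin d)
  haveI : Nontrivial E := inferInstance
  set μ : Measure E := volume
  have hdim : finrank ℝ E = d := finrank_euclideanSpace_fin
  have h6 : Integrable ((fun r : ℝ => g r * r ^ (d-1)) ∘ (Subtype.val : Set.Ioi (0:ℝ) → ℝ))
      (Measure.comap Subtype.val volume) := by
    rw [← MeasurableEmbedding.integrable_map_iff
        (MeasurableEmbedding.subtype_coe measurableSet_Ioi),
      map_comap_subtype_coe measurableSet_Ioi]
    exact h
  have h5 : Integrable (fun r : Set.Ioi (0:ℝ) => g r.1) (Measure.volumeIoiPow (d - 1)) := by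
    rw [Measure.volumeIoiPow, integrable_withDensity_iff]
    · refine h6.congr ?_
      refine Filter.Eventually.of_forall fun r => ?_
      simp only [Function.comp_apply]
      rw [ENNReal.toReal_ofReal (pow_nonneg (le_of_lt r.2) _)]
    · fun_prop
    · exact Filter.Eventually.of_forall fun r => ENNReal.ofReal_lt_top
  have h4 : Integrable (fun p : sphere (0:E) 1 × Set.Ioi (0:ℝ) => g p.2.1)
      (μ.toSphere.prod (Measure.volumeIoiPow (finrank ℝ E - 1))) := by
    rw [hdim]
    have heq : (fun p : sphere (0:E) 1 × Set.Ioi (0:ℝ) => g p.2.1)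
        = (fun r : Set.Ioi (0:ℝ) => g r.1) ∘ Prod.snd := rfl
    rw [heq, ← integrable_map_measure ?_ measurable_snd.aemeasurable]
    · rw [Measure.map_snd_prod]
      exact h5.smul_measure (measure_ne_top _ _)
    · rw [Measure.map_snd_prod]
      exact ((hg.comp measurable_subtype_coe).aestronglyMeasurable)
  have h3 : Integrable (fun x : ({(0:E)}ᶜ : Set E) => g ‖x.1‖) (Measure.comap Subtype.val μ) := by
    have := (μ.measurePreserving_homeomorphUnitSphereProd).integrable_comp_emb
      (Homeomorph.measurableEmbedding _) (g := fun p : sphere (0:E) 1 × Set.Ioi (0:ℝ) => g p.2.1)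
    simp only [Function.comp_def, homeomorphUnitSphereProd_apply_snd_coe] at this
    exact this.2 h4
  have hmeas : MeasurableSet ({(0:E)}ᶜ) := (measurableSet_singleton _).compl
  have hfin := (MeasurableEmbedding.subtype_coe hmeas).integrable_map_iff
      (μ := Measure.comap Subtype.val μ) (g := fun y : E => g ‖y‖)
  rw [map_comap_subtype_coe hmeas, MeasureTheory.restrict_compl_singleton] at hfin
  exact hfin.2 h3

lemma rpow_mul_pow_eq {d : ℕ} (hd : 1 ≤ d) (s : ℝ) {r : ℝ} (hr : 0 < r) :
    r ^ (s - d) * r ^ (d - 1) = r ^ (s - 1) := by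
  rw [← Real.rpow_natCast r (d - 1), Nat.cast_sub hd, ← Real.rpow_add hr]
  norm_num

lemma I1 {d : ℕ} (hd : 1 ≤ d) {s : ℝ} (hs1 : 1 ≤ s) :
    IntegrableOn (fun y : EuclideanSpace ℝ (Fin d) => ‖y‖ ^ (s - d))
      (closedBall (0 : EuclideanSpace ℝ (Fin d)) 2) volume := by
  set g : ℝ → ℝ := fun r => if r ≤ 2 then r ^ (s - d) else 0 with hgdef
  have hg : Measurable g := by
    apply Measurable.ite (measurableSet_le measurable_id measurable_const) ?_ measurable_const
    fun_prop
  have hrad : IntegrableOn (fun r => g r * r ^ (d - 1)) (Set.Ioi (0:ℝ)) volume := by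
    have base : IntegrableOn (fun r : ℝ => r ^ (s - 1)) (Set.Ioc (0:ℝ) 2) volume :=
      (intervalIntegrable_iff_integrableOn_Ioc_of_le (by norm_num)).1
        (intervalIntegral.intervalIntegrable_rpow' (by linarith))
    have hind : Integrable ((Set.Ioc (0:ℝ) 2).indicator fun r : ℝ => r ^ (s - 1)) volume :=
      (integrable_indicator_iff measurableSet_Ioc).2 base
    refine (hind.integrableOn (s := Set.Ioi (0:ℝ))).congr_fun ?_ measurableSet_Ioi
    intro r hr
    have hr0 : (0:ℝ) < r := hr
    show (Set.Ioc (0:ℝ) 2).indicator (fun r : ℝ => r ^ (s - 1)) r = g r * r ^ (d - 1)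
    by_cases h2 : r ≤ 2
    · rw [Set.indicator_of_mem (show r ∈ Set.Ioc (0:ℝ) 2 from ⟨hr0, h2⟩)]
      simp only [hgdef, if_pos h2]
      exact (rpow_mul_pow_eq hd s hr0).symm
    · rw [Set.indicator_of_notMem (fun hc => h2 hc.2)]
      simp [hgdef, if_neg h2]
  have := integrable_radial hd hg hrad
  have heq : (fun y : EuclideanSpace ℝ (Fin d) => g ‖y‖)
      = (closedBall (0 : EuclideanSpace ℝ (Fin d)) 2).indicator
          (fun y => ‖y‖ ^ (s - d)) := by
    funext y
    by_cases h2 : ‖y‖ ≤ 2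
    · rw [Set.indicator_of_mem (by simpa [mem_closedBall_zero_iff] using h2)]
      simp [hgdef, if_pos h2]
    · rw [Set.indicator_of_notMem (by simpa [mem_closedBall_zero_iff] using h2)]
      simp [hgdef, if_neg h2]
  rw [heq] at this
  exact (integrable_indicator_iff measurableSet_closedBall).1 this

lemma I2 {d : ℕ} (hd : 1 ≤ d) {s : ℝ} (hs1 : 1 ≤ s) {c : ℝ} (hc : 0 < c) :
    Integrable (fun y : EuclideanSpace ℝ (Fin d) => ‖y‖ ^ (s - d) * Real.exp (-c * ‖y‖ ^ 2))
      volume := by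
  have hg : Measurable (fun r : ℝ => r ^ (s - d) * Real.exp (-c * r ^ 2)) := by fun_prop
  refine integrable_radial hd hg ?_
  have base : IntegrableOn (fun r : ℝ => r ^ (s - 1) * Real.exp (-c * r ^ 2))
      (Set.Ioi (0:ℝ)) volume := integrableOn_rpow_mul_exp_neg_mul_sq hc (by linarith)
  refine base.congr_fun ?_ measurableSet_Ioi
  intro r hr
  have hr0 : (0:ℝ) < r := hr
  show r ^ (s - 1) * Real.exp (-c * r ^ 2)
      = r ^ (s - (d:ℝ)) * Real.exp (-c * r ^ 2) * r ^ (d - 1)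
  rw [mul_right_comm, rpow_mul_pow_eq hd s hr0]

lemma scaling_identity (d : ℕ) (s : ℝ) (x : ℝ) (hx : 0 < x) :
    ∫ y : EuclideanSpace ℝ (Fin d), ‖y‖ ^ (s - d) * Real.exp (-(x/4) * ‖y‖ ^ 2)
      = x ^ (-s / 2) *
        ∫ u : EuclideanSpace ℝ (Fin d), ‖u‖ ^ (s - d) * Real.exp (-(1/4:ℝ) * ‖u‖ ^ 2) := by
  set E := EuclideanSpace ℝ (Fin d)
  set R : ℝ := Real.sqrt x with hRdef
  have hR : 0 < R := Real.sqrt_pos.2 hx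
  have hR2 : R ^ 2 = x := Real.sq_sqrt hx.le
  set f : E → ℝ := fun y => ‖y‖ ^ (s - d) * Real.exp (-(x/4) * ‖y‖ ^ 2) with hfdef
  have key := Measure.integral_comp_inv_smul_of_nonneg (volume : Measure E) f hR.le
  have hdim : finrank ℝ E = d := finrank_euclideanSpace_fin
  rw [hdim] at key
  have hLHS : (fun u : E => f (R⁻¹ • u))
      = fun u : E => (R⁻¹) ^ (s - d) * (‖u‖ ^ (s - d) * Real.exp (-(1/4:ℝ) * ‖u‖ ^ 2)) := by
    funext u
    have hnorm : ‖R⁻¹ • u‖ = R⁻¹ * ‖u‖ := by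
      rw [norm_smul, Real.norm_eq_abs, abs_of_pos (inv_pos.2 hR)]
    simp only [hfdef, hnorm]
    rw [Real.mul_rpow (inv_pos.2 hR).le (norm_nonneg u)]
    have hexp : -(x/4) * (R⁻¹ * ‖u‖) ^ 2 = -(1/4:ℝ) * ‖u‖ ^ 2 := by
      field_simp
      nlinarith [hR2]
    rw [hexp]; ring
  rw [hLHS, integral_const_mul] at key
  have hRd : (0:ℝ) < R ^ d := pow_pos hR d
  have hsolve : ∫ y : E, f y = (R ^ d)⁻¹ * ((R⁻¹) ^ (s - d) *
      ∫ u : E, ‖u‖ ^ (s - d) * Real.exp (-(1/4:ℝ) * ‖u‖ ^ 2)) := by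
    rw [smul_eq_mul] at key
    rw [key, inv_mul_cancel_left₀ hRd.ne']
  rw [hsolve]
  have hcoef : (R ^ d)⁻¹ * (R⁻¹) ^ (s - d) = x ^ (-s / 2) := by
    rw [hRdef, Real.sqrt_eq_rpow, ← Real.rpow_natCast (x ^ (1/2:ℝ)) d,
      ← Real.rpow_mul hx.le, Real.inv_rpow (Real.rpow_nonneg hx.le _),
      ← Real.rpow_neg hx.le, ← Real.rpow_mul hx.le, ← Real.rpow_neg hx.le,
      ← Real.rpow_add hx]
    ring_nf
  rw [← mul_assoc, hcoef]

/-- For `1 ≤ s < d`, there are `0 < c1 ≤ c2` such that for all `x > 0`,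
`c1 ≤ J(x) ≤ c2 · max(1, x^(-s/2))`, where
`J(x) = ∫_{ℝ^d} |y|^(s-d)/(exp(x(|y|²/2 - 1)) + 1) dy`. -/
theorem J_two_sided_bound
    (d : ℕ) (hd : 1 ≤ d) (s : ℝ) (hs1 : 1 ≤ s) (hsd : s < d)
    (J : ℝ → ℝ)
    (hJ : ∀ x : ℝ, J x =
      ∫ y : EuclideanSpace ℝ (Fin d),
        ‖y‖ ^ (s - d) / (Real.exp (x * (‖y‖ ^ 2 / 2 - 1)) + 1)) :
    ∃ c1 c2 : ℝ, 0 < c1 ∧ c1 ≤ c2 ∧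
      ∀ x : ℝ, 0 < x → c1 ≤ J x ∧ J x ≤ c2 * max 1 (x ^ (-s / 2)) := by
  set E := EuclideanSpace ℝ (Fin d) with hE
  haveI : Nonempty (Fin d) := ⟨⟨0, hd⟩⟩
  have hI1 : IntegrableOn (fun y : E => ‖y‖ ^ (s - d)) (closedBall (0:E) 2) volume := I1 hd hs1
  have hI1b : IntegrableOn (fun y : E => ‖y‖ ^ (s - d)) (ball (0:E) 1) volume :=
    hI1.mono_set (ball_subset_closedBall.trans (closedBall_subset_closedBall one_le_two))
  set B : ℝ := ∫ y in ball (0:E) 1, ‖y‖ ^ (s - d) with hBdef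
  set A : ℝ := ∫ y in closedBall (0:E) 2, ‖y‖ ^ (s - d) with hAdef
  set C : ℝ := ∫ u : E, ‖u‖ ^ (s - d) * Real.exp (-(1/4:ℝ) * ‖u‖ ^ 2) with hCdef
  have hC0 : 0 ≤ C := integral_nonneg fun u => by positivity
  have hBA : B ≤ A := by
    apply setIntegral_mono_set hI1
    · exact Filter.Eventually.of_forall fun y => by positivity
    · exact HasSubset.Subset.eventuallyLE
        (ball_subset_closedBall.trans (closedBall_subset_closedBall one_le_two))
  have hB : 0 < B := by
    rw [hBdef, setIntegral_pos_iff_support_of_nonneg_ae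
      (Filter.Eventually.of_forall fun y => by positivity) hI1b]
    have hsub : ball (0:E) 1 \ {0}
        ⊆ Function.support (fun y : E => ‖y‖ ^ (s - d)) ∩ ball (0:E) 1 := by
      intro y hy
      refine ⟨?_, hy.1⟩
      have hy0 : y ≠ 0 := hy.2
      exact ne_of_gt (Real.rpow_pos_of_pos (norm_pos_iff.2 hy0) _)
    calc (0:ℝ≥0∞) < volume (ball (0:E) 1) := measure_ball_pos _ _ one_pos
      _ = volume (ball (0:E) 1 \ {0}) := (measure_diff_null (measure_singleton 0)).symm
      _ ≤ _ := measure_mono hsub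
  have hA0 : 0 ≤ A := le_trans hB.le hBA
  refine ⟨B / 2, A + C, by positivity, by linarith, ?_⟩
  intro x hx
  set h : E → ℝ := fun y => ‖y‖ ^ (s - d) / (Real.exp (x * (‖y‖ ^ 2 / 2 - 1)) + 1) with hhdef
  have hJx : J x = ∫ y : E, h y := hJ x
  have hm : Measurable h := by fun_prop
  have hposd : ∀ y : E, 0 < Real.exp (x * (‖y‖ ^ 2 / 2 - 1)) + 1 := fun y => by positivity
  have hnn : ∀ y, 0 ≤ h y := fun y =>
    div_nonneg (Real.rpow_nonneg (norm_nonneg y) _) (hposd y).le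
  set D : E → ℝ := fun y => (closedBall (0:E) 2).indicator (fun y => ‖y‖ ^ (s - d)) y
      + ‖y‖ ^ (s - d) * Real.exp (-(x/4) * ‖y‖ ^ 2) with hDdef
  have hle : ∀ y, h y ≤ D y := by
    intro y
    have ht0 : (0:ℝ) ≤ ‖y‖ := norm_nonneg y
    by_cases h2 : ‖y‖ ≤ 2
    · have hb : h y ≤ ‖y‖ ^ (s - d) := by
        apply div_le_self (Real.rpow_nonneg ht0 _)
        linarith [Real.exp_pos (x * (‖y‖ ^ 2 / 2 - 1))]
      have hind : (closedBall (0:E) 2).indicator (fun y : E => ‖y‖ ^ (s - d)) y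
          = ‖y‖ ^ (s - d) := Set.indicator_of_mem (mem_closedBall_zero_iff.2 h2) _
      have h3 : 0 ≤ ‖y‖ ^ (s - d) * Real.exp (-(x/4) * ‖y‖ ^ 2) := by positivity
      simp only [hDdef]
      rw [hind]
      linarith
    · push_neg at h2
      have hind : (closedBall (0:E) 2).indicator (fun y : E => ‖y‖ ^ (s - d)) y = 0 :=
        Set.indicator_of_notMem (by simp [mem_closedBall_zero_iff]; linarith) _
      set a : ℝ := x * (‖y‖ ^ 2 / 2 - 1) with hadef
      have step1 : h y ≤ ‖y‖ ^ (s - d) * Real.exp (-a) := by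
        rw [hhdef, div_le_iff₀ (hposd y)]
        have e1 : Real.exp (-a) * (Real.exp a + 1) = 1 + Real.exp (-a) := by
          rw [mul_add, ← Real.exp_add]; simp
        calc ‖y‖ ^ (s - d) = ‖y‖ ^ (s - d) * 1 := (mul_one _).symm
          _ ≤ ‖y‖ ^ (s - d) * (1 + Real.exp (-a)) := by
              apply mul_le_mul_of_nonneg_left _ (Real.rpow_nonneg ht0 _)
              linarith [Real.exp_pos (-a)]
          _ = ‖y‖ ^ (s - d) * Real.exp (-a) * (Real.exp a + 1) := by
              rw [mul_assoc, e1]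
      have step2 : Real.exp (-a) ≤ Real.exp (-(x/4) * ‖y‖ ^ 2) := by
        apply Real.exp_le_exp.2
        have h4 : (4:ℝ) ≤ ‖y‖ ^ 2 := by nlinarith
        rw [hadef]
        nlinarith
      calc h y ≤ ‖y‖ ^ (s - d) * Real.exp (-a) := step1
        _ ≤ ‖y‖ ^ (s - d) * Real.exp (-(x/4) * ‖y‖ ^ 2) :=
            mul_le_mul_of_nonneg_left step2 (Real.rpow_nonneg ht0 _)
        _ ≤ D y := by simp only [hDdef]; rw [hind]; linarith
  have hfx : Integrable (fun y : E => ‖y‖ ^ (s - d) * Real.exp (-(x/4) * ‖y‖ ^ 2)) volume :=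
    I2 hd hs1 (by positivity)
  have hDint : Integrable D volume :=
    ((integrable_indicator_iff measurableSet_closedBall).2 hI1).add hfx
  have hhint : Integrable h volume := by
    refine hDint.mono' hm.aestronglyMeasurable (Filter.Eventually.of_forall fun y => ?_)
    rw [Real.norm_eq_abs, abs_of_nonneg (hnn y)]
    exact hle y
  constructor
  · -- lower bound
    have l1 : ∫ y in ball (0:E) 1, h y ≤ ∫ y : E, h y :=
      setIntegral_le_integral hhint (Filter.Eventually.of_forall hnn)
    have l2 : ∫ y in ball (0:E) 1, ‖y‖ ^ (s - d) / 2 ≤ ∫ y in ball (0:E) 1, h y := by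
      apply setIntegral_mono_on (hI1b.div_const 2) hhint.integrableOn measurableSet_ball
      intro y hy
      have hylt : ‖y‖ < 1 := mem_ball_zero_iff.1 hy
      have hexple : Real.exp (x * (‖y‖ ^ 2 / 2 - 1)) ≤ 1 := by
        rw [Real.exp_le_one_iff]
        have hsq : ‖y‖ ^ 2 ≤ 1 := by nlinarith [norm_nonneg y]
        have : ‖y‖ ^ 2 / 2 - 1 ≤ 0 := by linarith
        exact mul_nonpos_of_nonneg_of_nonpos hx.le this
      show ‖y‖ ^ (s - d) / 2 ≤ ‖y‖ ^ (s - d) / (Real.exp (x * (‖y‖ ^ 2 / 2 - 1)) + 1)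
      gcongr
      linarith
    have l3 : ∫ y in ball (0:E) 1, ‖y‖ ^ (s - d) / 2 = B / 2 := by
      rw [integral_div]
    rw [hJx]
    linarith
  · -- upper bound
    have u1 : ∫ y : E, h y ≤ ∫ y : E, D y :=
      integral_mono_of_nonneg (Filter.Eventually.of_forall hnn) hDint
        (Filter.Eventually.of_forall hle)
    have u2 : ∫ y : E, D y = A + x ^ (-s / 2) * C := by
      rw [hDdef]
      rw [integral_add ((integrable_indicator_iff measurableSet_closedBall).2 hI1) hfx,
        integral_indicator measurableSet_closedBall, scaling_identity d s x hx]
    have hmax1 : (1:ℝ) ≤ max 1 (x ^ (-s / 2)) := le_max_left _ _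
    have hmax2 : x ^ (-s / 2) ≤ max 1 (x ^ (-s / 2)) := le_max_right _ _
    have t1 : 0 ≤ A * (max 1 (x ^ (-s / 2)) - 1) := mul_nonneg hA0 (by linarith)
    have t2 : 0 ≤ C * (max 1 (x ^ (-s / 2)) - x ^ (-s / 2)) := mul_nonneg hC0 (by linarith)
    rw [hJx]
    calc ∫ y : E, h y ≤ A + x ^ (-s / 2) * C := by rw [← u2]; exact u1
      _ ≤ (A + C) * max 1 (x ^ (-s / 2)) := by nlinarith
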